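/- Let B be a simple bipartite graph with bipartition V(B) = W ⊎ U, G its half-square, D = (T, β_D) a nice tree decomposition of B, and D' = (T, β_{D'}) the derived decomposition of G. Then for every node t of T and every edge {u, v} of G with u ∈ γ_{D'}(t) and v ∈ V(G) ∖ γ_{D'}(t), either u ∈ Original(t), or there is a special clique K ∈ Cliques(t) with u, v ∈ K. -/

import Mathlib

open SimpleGraph

section Defs

variable {V : Type*} {ι : Type*}

/-- `W, U` is a bipartition of the simple graph `B`. -/
def IsBipartition (B : SimpleGraph V) (W U : Set V) : Prop :=
  (∀ v, v ∈ W ∨ v ∈ U) ∧ (∀ v, ¬(v ∈ W ∧ v ∈ U)) ∧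
    ∀ ⦃a b⦄, B.Adj a b → (a ∈ W ∧ b ∈ U) ∨ (a ∈ U ∧ b ∈ W)

/-- The half-square of `B` on side `W`: two distinct vertices of `W` are adjacent
iff they have a common neighbor in `B`. -/
def halfSquare (B : SimpleGraph V) (W : Set V) : SimpleGraph V where
  Adj a b := a ≠ b ∧ a ∈ W ∧ b ∈ W ∧ ∃ s, B.Adj a s ∧ B.Adj b s
  symm := by
    refine ⟨?_⟩
    rintro a b ⟨hne, ha, hb, s, h1, h2⟩
    exact ⟨hne.symm, hb, ha, s, h2, h1⟩
  loopless := by refine ⟨?_⟩; rintro a ⟨hne, _⟩; exact hne rfl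

/-- Tree decomposition of the graph `H` with vertex set `S`, over the tree `T`. -/
structure IsTreeDecompOn (H : SimpleGraph V) (S : Set V) (T : SimpleGraph ι)
    (β : ι → Set V) : Prop where
  covers : ∀ v ∈ S, ∃ t, v ∈ β t
  edge_mem : ∀ ⦃u v⦄, H.Adj u v → ∃ t, u ∈ β t ∧ v ∈ β t
  conn : ∀ v ∈ S, (T.induce {t | v ∈ β t}).Connected

/-- `t'` is a descendant of `t` (inclusively) in the tree `T` rooted at `r`:
`t` lies on every path from `t'` to the root. -/
def Desc (T : SimpleGraph ι) (r : ι) (t t' : ι) : Prop :=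
  ∀ p : T.Walk t' r, p.IsPath → t ∈ p.support

/-- `γ(t)`: union of the bags of `t` and of all its descendants. -/
def gammaSet (T : SimpleGraph ι) (r : ι) (β : ι → Set V) (t : ι) : Set V :=
  ⋃ t' ∈ {t' | Desc T r t t'}, β t'

/-- The bag of the derived decomposition. -/
def derivedBag (B : SimpleGraph V) (W U : Set V) (T : SimpleGraph ι) (r : ι)
    (β : ι → Set V) (t : ι) : Set V :=
  (β t ∩ W) ∪ ⋃ s ∈ β t ∩ U, B.neighborSet s ∩ gammaSet T r β t

def originalSet (B : SimpleGraph V) (W U : Set V) (T : SimpleGraph ι) (r : ι)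
    (β : ι → Set V) (t : ι) : Set V :=
  β t ∩ derivedBag B W U T r β t

def fakeSet (B : SimpleGraph V) (W U : Set V) (T : SimpleGraph ι) (r : ι)
    (β : ι → Set V) (t : ι) : Set V :=
  derivedBag B W U T r β t \ β t

def cliquesAt (B : SimpleGraph V) (U : Set V) (β : ι → Set V) (t : ι) : Set (Set V) :=
  {K | ∃ s ∈ β t ∩ U, K = B.neighborSet s}

def IsChild (T : SimpleGraph ι) (r : ι) (t t' : ι) : Prop :=
  T.Adj t t' ∧ Desc T r t t'

def IsLeafNode (T : SimpleGraph ι) (r : ι) (β : ι → Set V) (t : ι) : Prop :=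
  (∀ t', ¬ IsChild T r t t') ∧ β t = ∅

def IsForgetNode (T : SimpleGraph ι) (r : ι) (β : ι → Set V) (w : V) (t : ι) : Prop :=
  ∃ t', IsChild T r t t' ∧ (∀ t'', IsChild T r t t'' → t'' = t') ∧
    w ∈ β t' ∧ β t = β t' \ {w}

def IsIntroduceNode (T : SimpleGraph ι) (r : ι) (β : ι → Set V) (w : V) (t : ι) : Prop :=
  ∃ t', IsChild T r t t' ∧ (∀ t'', IsChild T r t t'' → t'' = t') ∧
    w ∈ β t ∧ β t \ {w} = β t'

def IsJoinNode (T : SimpleGraph ι) (r : ι) (β : ι → Set V) (t : ι) : Prop :=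
  ∃ t₁ t₂, t₁ ≠ t₂ ∧ IsChild T r t t₁ ∧ IsChild T r t t₂ ∧
    (∀ t'', IsChild T r t t'' → t'' = t₁ ∨ t'' = t₂) ∧ β t = β t₁ ∧ β t = β t₂

/-- A nice (rooted) tree decomposition. -/
def IsNice (T : SimpleGraph ι) (r : ι) (β : ι → Set V) : Prop :=
  β r = ∅ ∧ ∀ t, IsLeafNode T r β t ∨ (∃ w, IsForgetNode T r β w t) ∨
    (∃ w, IsIntroduceNode T r β w t) ∨ IsJoinNode T r β t

/-- `E(X)`: edges of `G` with both endpoints in `X`. -/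
def edgesIn (G : SimpleGraph V) (X : Set V) : Set (Sym2 V) :=
  {e | e ∈ G.edgeSet ∧ ∀ x ∈ e, x ∈ X}

end Defs

lemma desc_trans {ι : Type*} {T : SimpleGraph ι} {r t t' t'' : ι}
    (h1 : Desc T r t t') (h2 : Desc T r t' t'') : Desc T r t t'' := by
  classical
  intro p hp
  have ht' := h2 p hp
  have hq : (p.dropUntil t' ht').IsPath := hp.dropUntil ht'
  have := h1 (p.dropUntil t' ht') hq
  exact Walk.support_dropUntil_subset p ht' this

lemma sep_lemma {V : Type*} {ι : Type*} {T : SimpleGraph ι} {r : ι} {β : ι → Set V}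
    {x : V} {t t₁ t₂ : ι}
    (hconn : (T.induce {t' | x ∈ β t'}).Connected)
    (h1 : Desc T r t t₁) (h2 : ¬ Desc T r t t₂)
    (hx1 : x ∈ β t₁) (hx2 : x ∈ β t₂) : x ∈ β t := by
  classical
  obtain ⟨p, hp, htp⟩ : ∃ p : T.Walk t₂ r, p.IsPath ∧ t ∉ p.support := by
    by_contra h
    push_neg at h
    exact h2 fun p hp => h p hp
  obtain ⟨w⟩ := hconn.preconnected ⟨t₁, hx1⟩ ⟨t₂, hx2⟩
  let q : T.Walk t₁ t₂ := w.map (Embedding.induce {t' | x ∈ β t'}).toHom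
  have hts : t ∈ (q.append p).support := by
    have := h1 (q.append p).bypass ((q.append p).bypass_isPath)
    exact (q.append p).support_bypass_subset this
  rw [Walk.support_append] at hts
  rcases List.mem_append.mp hts with h | h
  · rw [show q.support = _ from Walk.support_map _ _] at h
    obtain ⟨a, _, rfl⟩ := List.mem_map.mp h
    exact a.2
  · exact absurd (List.mem_of_mem_tail h) htp

/-- every edge `{u, v}` of `G` with `u ∈ γ_{D'}(t)` and
`v ∈ V(G) ∖ γ_{D'}(t)` either has `u ∈ Original(t)`, or lies inside some special
clique `K ∈ Cliques(t)`. -/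
theorem stmt_5 {V : Type*} {ι : Type*} (B : SimpleGraph V) (W U : Set V)
    (hbip : IsBipartition B W U)
    (T : SimpleGraph ι) (r : ι) (hT : T.IsTree) (β : ι → Set V)
    (hD : IsTreeDecompOn B Set.univ T β) (hnice : IsNice T r β)
    (t : ι) (u v : V) (hadj : (halfSquare B W).Adj u v)
    (hu : u ∈ gammaSet T r (derivedBag B W U T r β) t)
    (hv : v ∉ gammaSet T r (derivedBag B W U T r β) t) :
    u ∈ originalSet B W U T r β t ∨ ∃ K ∈ cliquesAt B U β t, u ∈ K ∧ v ∈ K := by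
  classical
  obtain ⟨hne, huW, hvW, s, hus, hvs⟩ := hadj
  have hsU : s ∈ U := by
    rcases hbip.2.2 hus with ⟨_, h⟩ | ⟨h, _⟩
    · exact h
    · exact absurd ⟨huW, h⟩ (hbip.2.1 u)
  obtain ⟨t₁, hdt₁, hu1⟩ : ∃ t₁, Desc T r t t₁ ∧ u ∈ derivedBag B W U T r β t₁ := by
    simpa [gammaSet, Set.mem_iUnion] using hu
  obtain ⟨tu, hdtu, hutu⟩ : ∃ tu, Desc T r t tu ∧ u ∈ β tu := by
    rcases hu1 with h | h
    · exact ⟨t₁, hdt₁, h.1⟩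
    · simp only [Set.mem_iUnion] at h
      obtain ⟨s', hs', hu'⟩ := h
      obtain ⟨t'', hd'', hb⟩ : ∃ t'', Desc T r t₁ t'' ∧ u ∈ β t'' := by
        simpa [gammaSet, Set.mem_iUnion] using hu'.2
      exact ⟨t'', desc_trans hdt₁ hd'', hb⟩
  have hvγ : ∀ t₂, Desc T r t t₂ → v ∉ β t₂ := by
    intro t₂ hd hvb
    apply hv
    have : v ∈ derivedBag B W U T r β t₂ := Or.inl ⟨hvb, hvW⟩
    exact Set.mem_biUnion hd this
  obtain ⟨tvs, hv2, hs2⟩ := hD.edge_mem hvs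
  have hnd : ¬ Desc T r t tvs := fun h => hvγ tvs h hv2
  obtain ⟨tus, hu3, hs3⟩ := hD.edge_mem hus
  by_cases hdus : Desc T r t tus
  · right
    have hst : s ∈ β t := sep_lemma (hD.conn s trivial) hdus hnd hs3 hs2
    exact ⟨B.neighborSet s, ⟨s, ⟨hst, hsU⟩, rfl⟩, hus.symm, hvs.symm⟩
  · left
    have hut : u ∈ β t := sep_lemma (hD.conn u trivial) hdtu hdus hutu hu3
    exact ⟨hut, Or.inl ⟨hut, huW⟩⟩
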